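/- Let N ≥ 1 and let A ⊆ ℝ^N be not relatively compact (equivalently, unbounded). Then nBC∞I(A) is maximal pointwise lineable in X: the dimension of X as a real vector space equals 𝔠, and for every f ∈ nBC∞I(A) there exists a linear subspace W of the space of functions ℝ^N → ℝ with dim(W) = 𝔠 and f ∈ W ⊆ nBC∞I(A) ∪ {0}. -/

import Mathlib

open MeasureTheory Filter Topology

noncomputable section

/-- Euclidean space `ℝ^N`. -/
abbrev RN (N : ℕ) := EuclideanSpace ℝ (Fin N)

/-- The space `X = C^∞(ℝ^N) ∩ ⋂_{p ∈ [1,∞)} L^p(ℝ^N)` of infinitely differentiable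
functions that are `p`-integrable for every real `p ≥ 1`. -/
def SmoothIntegrable (N : ℕ) : Set (RN N → ℝ) :=
  {f | ContDiff ℝ (⊤ : ℕ∞) f ∧
       ∀ p : ℝ, 1 ≤ p → MemLp f (ENNReal.ofReal p) volume}

/-- `f` is unbounded on `A`, i.e. `sup_{x ∈ A} |f x| = +∞`. -/
def UnboundedOn {N : ℕ} (A : Set (RN N)) (f : RN N → ℝ) : Prop :=
  ∀ C : ℝ, ∃ x ∈ A, C < |f x|

/-- `nBC∞I(A) = {f ∈ X : f is unbounded on A}`. -/
def nBCI {N : ℕ} (A : Set (RN N)) : Set (RN N → ℝ) :=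
  {f | f ∈ SmoothIntegrable N ∧ UnboundedOn A f}

open Metric Set

/-- Asymptotics of a nontrivial combination of geometric sequences with ratios in `(0,1]`. -/
lemma asymp (l : ↥(Set.Ioc (0:ℝ) 1) →₀ ℝ) (hl : l ≠ 0) :
    ∃ c ∈ l.support, ∀ᶠ n : ℕ in atTop,
      |l c| / 2 * (c:ℝ) ^ n ≤ |∑ d ∈ l.support, l d * (d:ℝ) ^ n| := by
  have hne : l.support.Nonempty := Finsupp.support_nonempty_iff.2 hl
  obtain ⟨c, hcs, hmax⟩ := l.support.exists_max_image (fun d => (d:ℝ)) hne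
  have hc0 : (0:ℝ) < c := c.2.1
  have hc1 : (c:ℝ) ≤ 1 := c.2.2
  have hlc : l c ≠ 0 := Finsupp.mem_support_iff.1 hcs
  have hε : (0:ℝ) < |l c| / 2 := by
    have := abs_pos.2 hlc; linarith
  refine ⟨c, hcs, ?_⟩
  -- the normalized tail tends to 0
  set u : ℕ → ℝ := fun n => ∑ d ∈ l.support.erase c, l d * ((d:ℝ)/(c:ℝ)) ^ n with hu
  have hu0 : Tendsto u atTop (𝓝 0) := by
    have : Tendsto u atTop (𝓝 (∑ d ∈ l.support.erase c, (0:ℝ))) := by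
      apply tendsto_finset_sum
      intro d hd
      have hdlt : (d:ℝ) < c := by
        have hle : (d:ℝ) ≤ c := hmax d (Finset.mem_of_mem_erase hd)
        rcases lt_or_eq_of_le hle with h | h
        · exact h
        · exact absurd (Subtype.ext h) (Finset.ne_of_mem_erase hd)
      have h0 : (0:ℝ) ≤ (d:ℝ)/(c:ℝ) := le_of_lt (div_pos d.2.1 hc0)
      have h1 : (d:ℝ)/(c:ℝ) < 1 := (div_lt_one hc0).2 hdlt
      have := (tendsto_pow_atTop_nhds_zero_of_lt_one h0 h1).const_mul (l d)
      simpa using this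
    simpa using this
  have hev : ∀ᶠ n : ℕ in atTop, |u n| < |l c| / 2 := by
    have := NormedAddCommGroup.tendsto_nhds_zero.mp hu0 (|l c| / 2) hε
    simpa [Real.norm_eq_abs] using this
  filter_upwards [hev] with n hn
  have hcpow : (0:ℝ) < (c:ℝ) ^ n := pow_pos hc0 n
  -- split the sum
  have hsplit : ∑ d ∈ l.support, l d * (d:ℝ) ^ n
      = l c * (c:ℝ) ^ n + u n * (c:ℝ) ^ n := by
    rw [← Finset.add_sum_erase _ _ hcs]
    congr 1
    rw [hu, Finset.sum_mul]
    apply Finset.sum_congr rfl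
    intro d hd
    have : ((d:ℝ)/(c:ℝ)) ^ n * (c:ℝ) ^ n = (d:ℝ) ^ n := by
      rw [div_pow, div_mul_cancel₀]
      exact ne_of_gt hcpow
    rw [mul_assoc, this]
  rw [hsplit]
  have habs : |l c * (c:ℝ)^n| - |u n * (c:ℝ)^n| ≤ |l c * (c:ℝ)^n + u n * (c:ℝ)^n| := by
    have h := abs_add_le (l c * (c:ℝ)^n + u n * (c:ℝ)^n) (-(u n * (c:ℝ)^n))
    simp only [add_neg_cancel_right, abs_neg] at h
    linarith
  have h1 : |l c * (c:ℝ)^n| = |l c| * (c:ℝ)^n := by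
    rw [abs_mul, abs_of_pos hcpow]
  have h2 : |u n * (c:ℝ)^n| = |u n| * (c:ℝ)^n := by
    rw [abs_mul, abs_of_pos hcpow]
  have h3 : |u n| * (c:ℝ)^n ≤ (|l c| / 2) * (c:ℝ)^n :=
    mul_le_mul_of_nonneg_right (le_of_lt hn) (le_of_lt hcpow)
  nlinarith

section Bumps
variable {N : ℕ} (x : ℕ → RN N) (hsep : ∀ n, ‖x n‖ + 1 ≤ ‖x (n+1)‖)

/-- the bump at `x n`, radius `(1/2)^(n+1)`. -/
def bump (n : ℕ) : ContDiffBump (x n) where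
  rIn := (1/2:ℝ)^(n+2)
  rOut := (1/2:ℝ)^(n+1)
  rIn_pos := by positivity
  rIn_lt_rOut := by
    apply pow_lt_pow_right_of_lt_one₀ (by norm_num) (by norm_num)
    omega

include hsep

lemma norm_mono : ∀ m n : ℕ, m < n → ‖x m‖ + 1 ≤ ‖x n‖ := by
  intro m n hmn
  induction n with
  | zero => omega
  | succ k ih =>
    rcases Nat.lt_succ_iff_lt_or_eq.1 hmn with h | h
    · linarith [hsep k, ih h]
    · subst h; exact hsep m

lemma norm_ge (n : ℕ) : (n:ℝ) ≤ ‖x n‖ := by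
  induction n with
  | zero => simpa using norm_nonneg (x 0)
  | succ k ih =>
    have := hsep k
    push_cast
    linarith

lemma dist_sep {m n : ℕ} (h : m ≠ n) : 1 ≤ dist (x m) (x n) := by
  wlog hlt : m < n generalizing m n
  · rw [dist_comm]; exact this h.symm (by omega)
  have h1 := norm_mono x hsep m n hlt
  have h2 : ‖x n‖ - ‖x m‖ ≤ ‖x n - x m‖ := norm_sub_norm_le _ _
  have h3 : dist (x m) (x n) = ‖x n - x m‖ := by rw [dist_comm, dist_eq_norm]
  linarith

omit hsep in
lemma bump_ne_zero_dist {n : ℕ} {y : RN N} (h : bump x n y ≠ 0) : dist y (x n) < 1/2 := by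
  have hy : y ∈ Function.support (bump x n) := h
  rw [ContDiffBump.support_eq] at hy
  have h1 : dist y (x n) < (1/2:ℝ)^(n+1) := mem_ball.1 hy
  have h2 : (1/2:ℝ)^(n+1) ≤ (1/2:ℝ)^1 := pow_le_pow_of_le_one (by norm_num) (by norm_num) (by omega)
  simpa using lt_of_lt_of_le h1 (by simpa using h2)

lemma bump_disjoint {m n : ℕ} (h : m ≠ n) {y : RN N} (hm : bump x m y ≠ 0) :
    bump x n y = 0 := by
  by_contra hn
  have h1 := bump_ne_zero_dist x hm
  have h2 := bump_ne_zero_dist x hn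
  have h3 := dist_sep x hsep h
  have htri := dist_triangle (x m) y (x n)
  rw [dist_comm (x m) y] at htri
  linarith

lemma bump_far {n : ℕ} {y : RN N} (h : ‖y‖ + 1/2 < n) : bump x n y = 0 := by
  by_contra hn
  have h1 := bump_ne_zero_dist x hn
  have h2 := norm_ge x hsep n
  have hd : ‖x n‖ ≤ ‖y‖ + dist y (x n) := by
    calc ‖x n‖ ≤ ‖y‖ + ‖x n - y‖ := by
          have := norm_sub_norm_le (x n) y; linarith
      _ = ‖y‖ + dist y (x n) := by rw [dist_eq_norm, norm_sub_rev]
  linarith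

/-- weighted sum of bumps -/
def bsum (g : ℕ → ℝ) (y : RN N) : ℝ := ∑' n, g n * bump x n y

lemma bsum_eq_finsum (g : ℕ → ℝ) {y : RN N} {m : ℕ} (hm : ‖y‖ + 1/2 < m) :
    bsum x g y = ∑ n ∈ Finset.range m, g n * bump x n y := by
  apply tsum_eq_sum
  intro n hn
  have hnm : m ≤ n := by simpa using hn
  have : ‖y‖ + 1/2 < n := lt_of_lt_of_le hm (by exact_mod_cast hnm)
  rw [bump_far x hsep this, mul_zero]

lemma bsum_contDiff (g : ℕ → ℝ) : ContDiff ℝ (⊤:ℕ∞) (bsum x g) := by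
  rw [contDiff_iff_contDiffAt]
  intro y₀
  set m : ℕ := ⌈‖y₀‖⌉₊ + 2 with hm
  have hfin : ContDiff ℝ ((⊤:ℕ∞) : WithTop ℕ∞) (fun y => ∑ n ∈ Finset.range m, g n * bump x n y) := by
    apply ContDiff.sum
    intro n _
    exact contDiff_const.mul (bump x n).contDiff
  apply (hfin.contDiffAt).congr_of_eventuallyEq
  have hopen : IsOpen (ball y₀ 1) := isOpen_ball
  have hmem : y₀ ∈ ball y₀ 1 := mem_ball_self one_pos
  filter_upwards [hopen.mem_nhds hmem] with y hy
  apply bsum_eq_finsum x hsep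
  have h1 : ‖y‖ < ‖y₀‖ + 1 := by
    have hb := mem_ball.1 hy
    have h2 := norm_sub_norm_le y y₀
    rw [dist_eq_norm] at hb
    linarith
  have h2 : ‖y₀‖ ≤ (⌈‖y₀‖⌉₊ : ℝ) := Nat.le_ceil _
  have h3 : (m:ℝ) = (⌈‖y₀‖⌉₊ : ℝ) + 2 := by rw [hm]; push_cast; ring
  rw [h3]; linarith

omit hsep in
lemma bump_self (k : ℕ) : bump x k (x k) = 1 :=
  (bump x k).one_of_mem_closedBall (by simp [(bump x k).rIn_pos.le])

lemma bsum_apply_x (g : ℕ → ℝ) (k : ℕ) : bsum x g (x k) = g k := by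
  rw [bsum, tsum_eq_single k]
  · rw [bump_self x k, mul_one]
  · intro n hn
    have hk : bump x k (x k) ≠ 0 := by rw [bump_self x k]; norm_num
    rw [bump_disjoint x hsep (Ne.symm hn) hk, mul_zero]

omit hsep in
lemma bsum_nonneg {g : ℕ → ℝ} (hg : ∀ n, 0 ≤ g n) (y : RN N) : 0 ≤ bsum x g y :=
  tsum_nonneg fun n => mul_nonneg (hg n) (bump x n).nonneg

/-- `θ`, the sum of all bumps -/
def theta (y : RN N) : ℝ := bsum x (fun _ => 1) y

lemma theta_le_one (y : RN N) : theta x y ≤ 1 := by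
  by_cases h : ∀ n, bump x n y = 0
  · have h0 : theta x y = 0 := by
      rw [theta, bsum]; simp [h]
    rw [h0]; norm_num
  · push_neg at h
    obtain ⟨k, hk⟩ := h
    have h0 : theta x y = bump x k y := by
      rw [theta, bsum, tsum_eq_single k, one_mul]
      intro n hn
      rw [bump_disjoint x hsep (Ne.symm hn) hk, mul_zero]
    rw [h0]; exact (bump x k).le_one

omit hsep in
lemma theta_mem_U {y : RN N} (h : theta x y ≠ 0) :
    y ∈ ⋃ n, ball (x n) ((1/2:ℝ)^(n+1)) := by
  have h2 : ∃ n, bump x n y ≠ 0 := by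
    by_contra hc
    push_neg at hc
    apply h
    rw [theta, bsum]; simp [hc]
  obtain ⟨n, hn⟩ := h2
  apply mem_iUnion.2 ⟨n, ?_⟩
  have : y ∈ Function.support (bump x n) := hn
  rwa [ContDiffBump.support_eq] at this

lemma theta_memLp (hN : 1 ≤ N) (p : ENNReal) : MemLp (theta x) p volume := by
  haveI : Nonempty (Fin N) := ⟨⟨0, hN⟩⟩
  haveI : Nontrivial (RN N) := by
    refine ⟨0, EuclideanSpace.single ⟨0, hN⟩ (1:ℝ), ?_⟩
    intro h
    have := congrArg norm h
    rw [EuclideanSpace.norm_single] at this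
    simp at this
  set U : Set (RN N) := ⋃ n, ball (x n) ((1/2:ℝ)^(n+1)) with hU
  have hUopen : IsOpen U := isOpen_iUnion fun n => isOpen_ball
  have hUvol : volume U ≠ ⊤ := by
    set q : ENNReal := ENNReal.ofReal (1/2) with hq
    have hq1 : q < 1 := by rw [hq]; exact ENNReal.ofReal_lt_one.2 (by norm_num)
    have hC : volume (ball (0:RN N) 1) < ⊤ := measure_ball_lt_top
    have hball : ∀ n : ℕ, volume (ball (x n) ((1/2:ℝ)^(n+1))) ≤ q^(n+1) * volume (ball (0:RN N) 1) := by
      intro n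
      rw [Measure.addHaar_ball volume (x n) (by positivity)]
      apply mul_le_mul_left
      have h1 : ((1/2:ℝ)^(n+1))^(Module.finrank ℝ (RN N)) ≤ (1/2:ℝ)^(n+1) := by
        have hfr : 1 ≤ Module.finrank ℝ (RN N) := by
          rw [finrank_euclideanSpace]; simpa using hN
        calc ((1/2:ℝ)^(n+1))^(Module.finrank ℝ (RN N)) ≤ ((1/2:ℝ)^(n+1))^1 :=
              pow_le_pow_of_le_one (by positivity) (by
                apply pow_le_one₀ <;> norm_num) hfr
          _ = (1/2:ℝ)^(n+1) := pow_one _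
      calc ENNReal.ofReal (((1/2:ℝ)^(n+1))^(Module.finrank ℝ (RN N)))
            ≤ ENNReal.ofReal ((1/2:ℝ)^(n+1)) := ENNReal.ofReal_le_ofReal h1
        _ = q^(n+1) := ENNReal.ofReal_pow (by norm_num) (n+1)
    have hsum : volume U ≤ (∑' n : ℕ, q^(n+1)) * volume (ball (0:RN N) 1) := by
      calc volume U ≤ ∑' n : ℕ, volume (ball (x n) ((1/2:ℝ)^(n+1))) := measure_iUnion_le _
        _ ≤ ∑' n : ℕ, q^(n+1) * volume (ball (0:RN N) 1) := ENNReal.tsum_le_tsum hball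
        _ = (∑' n : ℕ, q^(n+1)) * volume (ball (0:RN N) 1) := ENNReal.tsum_mul_right
    have hgeo : (∑' n : ℕ, q^(n+1)) ≤ (1 - q)⁻¹ := by
      calc (∑' n : ℕ, q^(n+1)) ≤ ∑' n : ℕ, q^n := by
            apply ENNReal.tsum_le_tsum
            intro n
            calc q^(n+1) = q^n * q := pow_succ q n
              _ ≤ q^n * 1 := mul_le_mul_right hq1.le _
              _ = q^n := mul_one _
        _ = (1 - q)⁻¹ := ENNReal.tsum_geometric q
    have hinv : (1 - q)⁻¹ ≠ ⊤ := by
      rw [ENNReal.inv_ne_top]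
      exact (tsub_pos_iff_lt.2 hq1).ne'
    exact ne_top_of_le_ne_top (ENNReal.mul_ne_top hinv hC.ne)
      (hsum.trans (mul_le_mul_left hgeo _))
  have hcont : Continuous (theta x) := (bsum_contDiff x hsep (fun _ => (1:ℝ))).continuous
  apply MemLp.of_le (memLp_indicator_const p hUopen.measurableSet (1:ℝ) (Or.inr hUvol))
    hcont.aestronglyMeasurable
  apply Filter.Eventually.of_forall
  intro y
  by_cases hyU : y ∈ U
  · have h1 : U.indicator (fun _ => (1:ℝ)) y = 1 := Set.indicator_of_mem hyU _
    rw [h1, Real.norm_eq_abs, Real.norm_eq_abs, abs_one]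
    have hpos : (0:ℝ) ≤ theta x y :=
      bsum_nonneg x (g := fun _ => (1:ℝ)) (fun n => by norm_num) y
    exact abs_le.2 ⟨by linarith, theta_le_one x hsep y⟩
  · have h0 : theta x y = 0 := by
      by_contra hc
      exact hyU (theta_mem_U x hc)
    rw [h0]
    simp

/-- `η`, the function with `η (x k) = k`. -/
def eta (y : RN N) : ℝ := bsum x (fun n => (n:ℝ)) y

omit hsep in
lemma eta_nonneg (y : RN N) : 0 ≤ eta x y :=
  bsum_nonneg x (fun n => by positivity) y

lemma eta_contDiff : ContDiff ℝ (⊤:ℕ∞) (eta x) := bsum_contDiff x hsep _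

lemma eta_x (k : ℕ) : eta x (x k) = k := bsum_apply_x x hsep _ k

variable (w : RN N → ℝ)

/-- the family `v c = c^η ⬝ w`. -/
def vfam (c : ↥(Set.Ioc (0:ℝ) 1)) : RN N → ℝ :=
  fun y => Real.exp (Real.log c * eta x y) * w y

lemma vfam_contDiff (hw : ContDiff ℝ (⊤:ℕ∞) w) (c : ↥(Set.Ioc (0:ℝ) 1)) :
    ContDiff ℝ (⊤:ℕ∞) (vfam x w c) := by
  exact (Real.contDiff_exp.comp (contDiff_const.mul (eta_contDiff x hsep))).mul hw

omit hsep in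
lemma vfam_abs_le (c : ↥(Set.Ioc (0:ℝ) 1)) (y : RN N) :
    |vfam x w c y| ≤ |w y| := by
  rw [vfam, abs_mul]
  have h1 : Real.exp (Real.log c * eta x y) ≤ 1 := by
    rw [Real.exp_le_one_iff]
    exact mul_nonpos_of_nonpos_of_nonneg (Real.log_nonpos c.2.1.le c.2.2) (eta_nonneg x y)
    
  have h2 : (0:ℝ) ≤ Real.exp (Real.log c * eta x y) := (Real.exp_pos _).le
  calc |Real.exp (Real.log c * eta x y)| * |w y|
      = Real.exp (Real.log c * eta x y) * |w y| := by rw [abs_of_nonneg h2]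
    _ ≤ 1 * |w y| := mul_le_mul_of_nonneg_right h1 (abs_nonneg _)
    _ = |w y| := one_mul _

lemma vfam_x (c : ↥(Set.Ioc (0:ℝ) 1)) (k : ℕ) :
    vfam x w c (x k) = (c:ℝ)^k * w (x k) := by
  rw [vfam, eta_x x hsep]
  congr 1
  rw [mul_comm (Real.log (c:ℝ)) (k:ℝ), Real.exp_nat_mul, Real.exp_log c.2.1]

omit hsep in
lemma vfam_one : vfam x w ⟨1, by constructor <;> norm_num⟩ = w := by
  funext y
  rw [vfam]
  norm_num

omit hsep in
lemma combo_apply (l : ↥(Set.Ioc (0:ℝ) 1) →₀ ℝ) (y : RN N) :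
    (l.sum fun i a => a • vfam x w i) y = ∑ i ∈ l.support, l i * vfam x w i y := by
  rw [Finsupp.sum, Finset.sum_apply]
  simp [Pi.smul_apply, smul_eq_mul]

lemma combo_x (l : ↥(Set.Ioc (0:ℝ) 1) →₀ ℝ) (k : ℕ) :
    (l.sum fun i a => a • vfam x w i) (x k)
      = (∑ d ∈ l.support, l d * (d:ℝ)^k) * w (x k) := by
  rw [combo_apply, Finset.sum_mul]
  apply Finset.sum_congr rfl
  intro d _
  rw [vfam_x x hsep, mul_assoc]

lemma combo_contDiff (hw : ContDiff ℝ (⊤:ℕ∞) w) (l : ↥(Set.Ioc (0:ℝ) 1) →₀ ℝ) :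
    ContDiff ℝ (⊤:ℕ∞) (l.sum fun i a => a • vfam x w i) := by
  have heq : (l.sum fun i a => a • vfam x w i)
      = fun y => ∑ i ∈ l.support, l i * vfam x w i y := funext (combo_apply x w l)
  rw [heq]
  exact ContDiff.sum fun i _ => contDiff_const.mul (vfam_contDiff x hsep w hw i)

lemma combo_mem_SI (hw : ContDiff ℝ (⊤:ℕ∞) w)
    (hwLp : ∀ p : ℝ, 1 ≤ p → MemLp w (ENNReal.ofReal p) volume)
    (l : ↥(Set.Ioc (0:ℝ) 1) →₀ ℝ) :
    (l.sum fun i a => a • vfam x w i) ∈ SmoothIntegrable N := by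
  have hsm := combo_contDiff x hsep w hw l
  refine ⟨hsm, ?_⟩
  intro p hp
  set K : ℝ := ∑ i ∈ l.support, |l i| with hK
  have hK0 : 0 ≤ K := Finset.sum_nonneg fun i _ => abs_nonneg _
  have hb : ∀ y, ‖(l.sum fun i a => a • vfam x w i) y‖ ≤ ‖K * w y‖ := by
    intro y
    rw [combo_apply, Real.norm_eq_abs, Real.norm_eq_abs, abs_mul, abs_of_nonneg hK0]
    calc |∑ i ∈ l.support, l i * vfam x w i y|
        ≤ ∑ i ∈ l.support, |l i * vfam x w i y| := Finset.abs_sum_le_sum_abs _ _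
      _ ≤ ∑ i ∈ l.support, |l i| * |w y| := by
          apply Finset.sum_le_sum
          intro i _
          rw [abs_mul]
          exact mul_le_mul_of_nonneg_left (vfam_abs_le x w i y) (abs_nonneg _)
      _ = K * |w y| := by rw [← Finset.sum_mul]
  exact MemLp.of_le ((hwLp p hp).const_mul K) hsm.continuous.aestronglyMeasurable
    (Filter.Eventually.of_forall hb)

lemma combo_unbounded (A : Set (RN N)) (hxA : ∀ n, x n ∈ A)
    (hMn : ∀ n : ℕ, ((n:ℝ))^n ≤ |w (x n)|)
    (l : ↥(Set.Ioc (0:ℝ) 1) →₀ ℝ) (hl : l ≠ 0) :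
    UnboundedOn A (l.sum fun i a => a • vfam x w i) := by
  intro C
  obtain ⟨c, hcs, hev⟩ := asymp l hl
  have hc0 : (0:ℝ) < c := c.2.1
  have hc1 : (c:ℝ) ≤ 1 := c.2.2
  set a : ℝ := |l c| / 2 with ha
  have ha0 : 0 < a := by
    have := abs_pos.2 (Finsupp.mem_support_iff.1 hcs); rw [ha]; linarith
  obtain ⟨K₀, hK₀⟩ := Filter.eventually_atTop.1 hev
  obtain ⟨k₀, hk₀⟩ := exists_nat_gt (max 1 (C/a) / c)
  set k : ℕ := max K₀ k₀ with hk
  have hkk₀ : (k₀:ℝ) ≤ (k:ℝ) := by exact_mod_cast le_max_right K₀ k₀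
  have hck : max 1 (C/a) < (c:ℝ) * (k:ℝ) := by
    rw [div_lt_iff₀ hc0] at hk₀
    calc max 1 (C/a) < (k₀:ℝ) * c := hk₀
      _ ≤ (k:ℝ) * c := mul_le_mul_of_nonneg_right hkk₀ hc0.le
      _ = (c:ℝ) * (k:ℝ) := mul_comm _ _
  have hck1 : 1 ≤ (c:ℝ) * (k:ℝ) := le_of_lt (lt_of_le_of_lt (le_max_left _ _) hck)
  have hkne : k ≠ 0 := by
    intro h
    rw [h] at hck1
    norm_num at hck1
  have hCa : C < a * ((c:ℝ) * (k:ℝ)) := by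
    rcases le_or_gt C 0 with h | h
    · have hpos : (0:ℝ) < a * ((c:ℝ) * (k:ℝ)) := mul_pos ha0 (by linarith)
      linarith
    · have h2 : C / a < (c:ℝ) * (k:ℝ) := lt_of_le_of_lt (le_max_right 1 _) hck
      rwa [div_lt_iff₀' ha0] at h2
  refine ⟨x k, hxA k, ?_⟩
  have hval := combo_x x hsep w l k
  rw [hval, abs_mul]
  have hP := hK₀ k (le_max_left K₀ k₀)
  calc C < a * ((c:ℝ) * (k:ℝ)) := hCa
    _ ≤ a * ((c:ℝ) * (k:ℝ))^k := by
        apply mul_le_mul_of_nonneg_left (le_self_pow₀ hck1 hkne) ha0.le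
    _ = (a * (c:ℝ)^k) * (k:ℝ)^k := by rw [mul_pow]; ring
    _ ≤ |∑ d ∈ l.support, l d * (d:ℝ)^k| * |w (x k)| := by
        apply mul_le_mul hP (hMn k) (by positivity) (abs_nonneg _)

lemma vfam_linearIndependent (hw_ne : ∀ n, w (x n) ≠ 0) :
    LinearIndependent ℝ (vfam x w) := by
  rw [linearIndependent_iff]
  intro l hl0
  by_contra hl
  obtain ⟨c, hcs, hev⟩ := asymp l hl
  have ha0 : (0:ℝ) < |l c| / 2 := by
    have := abs_pos.2 (Finsupp.mem_support_iff.1 hcs); linarith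
  obtain ⟨K₀, hK₀⟩ := Filter.eventually_atTop.1 hev
  have hP := hK₀ K₀ le_rfl
  have hval := combo_x x hsep w l K₀
  rw [Finsupp.linearCombination_apply] at hl0
  rw [hl0] at hval
  have hPne : ∑ d ∈ l.support, l d * (d:ℝ)^K₀ ≠ 0 := by
    intro h
    rw [h] at hP
    simp only [abs_zero] at hP
    nlinarith [pow_pos c.2.1 K₀]
  exact hPne (by
    have := mul_eq_zero.1 hval.symm
    rcases this with h | h
    · exact h
    · exact absurd h (hw_ne K₀))

end Bumps

lemma card_SI_le (N : ℕ) : Cardinal.mk ↥(SmoothIntegrable N) ≤ Cardinal.continuum := by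
  obtain ⟨s, hsc, hsd⟩ := TopologicalSpace.exists_countable_dense (RN N)
  haveI : Countable ↥s := hsc.to_subtype
  have hinj : Function.Injective
      (fun (f : ↥(SmoothIntegrable N)) => (fun a : ↥s => (f : RN N → ℝ) a.1)) := by
    intro f g h
    apply Subtype.ext
    apply Continuous.ext_on hsd f.2.1.continuous g.2.1.continuous
    intro y hy
    exact congrFun h ⟨y, hy⟩
  calc Cardinal.mk ↥(SmoothIntegrable N) ≤ Cardinal.mk (↥s → ℝ) :=
        Cardinal.mk_le_of_injective hinj
    _ = (Cardinal.mk ℝ) ^ (Cardinal.mk ↥s) := (Cardinal.power_def ℝ ↥s).symm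
    _ ≤ Cardinal.continuum ^ Cardinal.aleph0 := by
        rw [Cardinal.mk_real]
        exact Cardinal.power_le_power_left Cardinal.continuum_ne_zero Cardinal.mk_le_aleph0
    _ = Cardinal.continuum := Cardinal.continuum_power_aleph0

lemma exists_seq {N : ℕ} (A : Set (RN N)) (f : RN N → ℝ) (hf_cont : Continuous f)
    (hunb : UnboundedOn A f) :
    ∃ x : ℕ → RN N, (∀ n, x n ∈ A) ∧ (∀ n : ℕ, ((n:ℝ))^n ≤ |f (x n)|) ∧
      (∀ n, ‖x n‖ + 1 ≤ ‖x (n+1)‖) := by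
  have hpt : ∀ C R : ℝ, ∃ y, y ∈ A ∧ C ≤ |f y| ∧ R ≤ ‖y‖ := by
    intro C R
    obtain ⟨B, hB⟩ :=
      (isCompact_closedBall (0:RN N) R).exists_bound_of_continuousOn hf_cont.continuousOn
    obtain ⟨y, hyA, hy⟩ := hunb (max C B)
    refine ⟨y, hyA, le_of_lt (lt_of_le_of_lt (le_max_left _ _) hy), ?_⟩
    by_contra h
    push_neg at h
    have h1 : ‖f y‖ ≤ B := hB y (by
      simpa [Metric.mem_closedBall, dist_zero_right] using h.le)
    rw [Real.norm_eq_abs] at h1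
    have h2 := lt_of_le_of_lt (le_max_right C B) hy
    linarith
  choose φ hφA hφf hφn using hpt
  refine ⟨fun n => Nat.rec (motive := fun _ => RN N) (φ (((0:ℕ):ℝ)^(0:ℕ)) 0)
      (fun m y => φ (((m+1:ℕ):ℝ)^(m+1)) (‖y‖+1)) n, ?_, ?_, ?_⟩
  · intro n
    cases n with
    | zero => exact hφA _ _
    | succ m => exact hφA _ _
  · intro n
    cases n with
    | zero => exact hφf _ _
    | succ m => exact hφf _ _
  · intro n
    exact hφn _ _

theorem nBCI_maximal_pointwise_lineable (N : ℕ) (hN : 1 ≤ N)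
    (A : Set (RN N)) (hA : ¬ Bornology.IsBounded A) :
    Module.rank ℝ (Submodule.span ℝ (SmoothIntegrable N)) = Cardinal.continuum ∧
    ∀ f ∈ nBCI A, ∃ W : Submodule ℝ (RN N → ℝ),
      Module.rank ℝ W = Cardinal.continuum ∧ f ∈ W ∧
      (W : Set (RN N → ℝ)) ⊆ nBCI A ∪ {0} := by
  constructor
  · apply le_antisymm
    · exact le_trans (rank_span_le _) (card_SI_le N)
    · -- lower bound via the family built on the weight `theta`
      set x : ℕ → RN N := fun n => (n:ℝ) • EuclideanSpace.single (⟨0,hN⟩ : Fin N) (1:ℝ)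
        with hx
      have hnorm : ∀ n : ℕ, ‖x n‖ = n := by
        intro n
        rw [hx]
        simp [norm_smul, EuclideanSpace.norm_single]
      have hsep : ∀ n, ‖x n‖ + 1 ≤ ‖x (n+1)‖ := by
        intro n
        rw [hnorm, hnorm]
        push_cast
        linarith
      have hθx : ∀ n, theta x (x n) = 1 := fun n => bsum_apply_x x hsep _ n
      have hθne : ∀ n, theta x (x n) ≠ 0 := by
        intro n; rw [hθx]; norm_num
      have hli := vfam_linearIndependent x hsep (theta x) hθne
      have hsub : Set.range (vfam x (theta x)) ⊆ SmoothIntegrable N := by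
        rintro _ ⟨c, rfl⟩
        refine ⟨vfam_contDiff x hsep _ (bsum_contDiff x hsep _) c, ?_⟩
        intro p hp
        apply MemLp.of_le (theta_memLp x hsep hN (ENNReal.ofReal p))
          (vfam_contDiff x hsep _ (bsum_contDiff x hsep _) c).continuous.aestronglyMeasurable
        apply Filter.Eventually.of_forall
        intro y
        rw [Real.norm_eq_abs, Real.norm_eq_abs]
        exact vfam_abs_le x _ c y
      calc Cardinal.continuum = Cardinal.mk ↥(Set.Ioc (0:ℝ) 1) :=
            (Cardinal.mk_Ioc_real zero_lt_one).symm
        _ = Cardinal.mk ↥(Set.range (vfam x (theta x))) :=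
            (Cardinal.mk_range_eq _ hli.injective).symm
        _ = Module.rank ℝ ↥(Submodule.span ℝ (Set.range (vfam x (theta x)))) :=
            (rank_span hli).symm
        _ ≤ Module.rank ℝ ↥(Submodule.span ℝ (SmoothIntegrable N)) :=
            Submodule.rank_mono (Submodule.span_mono hsub)
  · rintro f ⟨⟨hf_sm, hf_Lp⟩, hf_unb⟩
    obtain ⟨x, hxA, hMn, hsep⟩ := exists_seq A f hf_sm.continuous hf_unb
    have hfne : ∀ n, f (x n) ≠ 0 := by
      intro n
      have h1 := hMn n
      have h2 : (0:ℝ) < ((n:ℝ))^n := by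
        cases n with
        | zero => norm_num
        | succ m => positivity
      intro h
      rw [h] at h1
      simp only [abs_zero] at h1
      linarith
    have hli := vfam_linearIndependent x hsep f hfne
    refine ⟨Submodule.span ℝ (Set.range (vfam x f)), ?_, ?_, ?_⟩
    · rw [rank_span hli, Cardinal.mk_range_eq _ hli.injective,
        Cardinal.mk_Ioc_real zero_lt_one]
    · exact Submodule.subset_span ⟨⟨1, by constructor <;> norm_num⟩, vfam_one x f⟩
    · intro g hg
      by_cases hg0 : g = 0
      · right
        simp [hg0]
      · left
        obtain ⟨l, hl⟩ := Finsupp.mem_span_range_iff_exists_finsupp.1 hg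
        have hlne : l ≠ 0 := by
          rintro rfl
          apply hg0
          rw [← hl]
          simp
        constructor
        · rw [← hl]
          exact combo_mem_SI x hsep f hf_sm hf_Lp l
        · rw [← hl]
          exact combo_unbounded x hsep f A hxA hMn l hlne
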